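/- Let (f_k)_{k∈ℕ} be a frame sequence in H with synthesis operator T and frame operator S = T T*, and let S† be the Moore-Penrose pseudoinverse of S. Let f ∈ range(T) and set c₀ := (⟨f, S†f_k⟩)_k ∈ ℓ²(ℕ). Then T c₀ = f, and for every c ∈ ℓ²(ℕ) with Tc = f one has ‖c‖² = ‖c₀‖² + ‖c − c₀‖²; in particular c₀ has minimal norm among all c ∈ ℓ²(ℕ) with Tc = f. -/

import Mathlib

/- Setting: `H` is a complex Hilbert space, `ℓ2` is the Hilbert space of square-summable
complex sequences with standard orthonormal basis `lp.single 2 k 1`. -/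

noncomputable section

abbrev ℓ2 : Type := lp (fun _ : ℕ => ℂ) 2

variable {H : Type} [NormedAddCommGroup H] [InnerProductSpace ℂ H] [CompleteSpace H]

/-- The closed linear span `V` of the set of values of the sequence `f`. -/
def spanClosure (f : ℕ → H) : Submodule ℂ H :=
  (Submodule.span ℂ (Set.range f)).topologicalClosure

instance (f : ℕ → H) : CompleteSpace (spanClosure f) :=
  Submodule.topologicalClosure.completeSpace _

/-- `f` is a frame sequence with frame bounds `A`, `B`:  the frame inequality
`A‖g‖² ≤ ∑ₖ |⟨g, fₖ⟩|² ≤ B‖g‖²` holds for every `g` in the closed linear span `V` of the `fₖ`.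
(In Mathlib's convention, the paper's `⟨g, fₖ⟩`, linear in the first argument, is `⟪fₖ, g⟫`.) -/
def IsFrameSeqWith (f : ℕ → H) (A B : ℝ) : Prop :=
  0 < A ∧ 0 < B ∧
    ∀ g ∈ spanClosure f,
      Summable (fun k => ‖(inner ℂ (f k) g : ℂ)‖ ^ 2) ∧
      A * ‖g‖ ^ 2 ≤ ∑' k, ‖(inner ℂ (f k) g : ℂ)‖ ^ 2 ∧
      (∑' k, ‖(inner ℂ (f k) g : ℂ)‖ ^ 2) ≤ B * ‖g‖ ^ 2

/-- `Ad` is the Moore–Penrose pseudoinverse of the bounded operator `A`: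
`A A† A = A`, `A† A A† = A†`, `(A A†)* = A A†` and `(A† A)* = A† A`. -/
def IsMoorePenrose {E F : Type} [NormedAddCommGroup E] [InnerProductSpace ℂ E] [CompleteSpace E]
    [NormedAddCommGroup F] [InnerProductSpace ℂ F] [CompleteSpace F]
    (A : E →L[ℂ] F) (Ad : F →L[ℂ] E) : Prop :=
  A ∘L Ad ∘L A = A ∧ Ad ∘L A ∘L Ad = Ad ∧
  ContinuousLinearMap.adjoint (A ∘L Ad) = A ∘L Ad ∧
  ContinuousLinearMap.adjoint (Ad ∘L A) = Ad ∘L A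

/-- for a frame sequence with synthesis operator `T`, frame operator
`S = T T*` and `S†` the Moore-Penrose pseudoinverse of `S`: for `g ∈ range T` and
`c₀ := (⟨g, S†fₖ⟩)ₖ ∈ ℓ²` one has `T c₀ = g`, and every `c ∈ ℓ²` with `Tc = g` satisfies
`‖c‖² = ‖c₀‖² + ‖c - c₀‖²`; in particular `c₀` has minimal norm among such `c`. -/
theorem stmt14 (f : ℕ → H) (A B : ℝ) (hF : IsFrameSeqWith f A B)
    (T : ℓ2 →L[ℂ] H) (hT : ∀ c : ℓ2, HasSum (fun k => c k • f k) (T c))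
    (S : H →L[ℂ] H) (hS : S = T ∘L ContinuousLinearMap.adjoint T)
    (Sdag : H →L[ℂ] H) (hSdag : IsMoorePenrose S Sdag)
    (g : H) (hg : g ∈ Set.range T)
    (c₀ : ℓ2) (hc₀ : ∀ k : ℕ, c₀ k = (inner ℂ (Sdag (f k)) g : ℂ)) :
    T c₀ = g ∧
      (∀ c : ℓ2, T c = g → ‖c‖ ^ 2 = ‖c₀‖ ^ 2 + ‖c - c₀‖ ^ 2) ∧
      ∀ c : ℓ2, T c = g → ‖c₀‖ ≤ ‖c‖ := by
  obtain ⟨hAAdA, hAdAAd, hAAd, hAdA⟩ := hSdag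
  obtain ⟨d, hd⟩ := hg
  set Ads := ContinuousLinearMap.adjoint Sdag with hAds
  -- f k = T (single k)
  have hfk : ∀ k : ℕ, f k = T (lp.single 2 k (1 : ℂ)) := by
    intro k
    refine ((hT (lp.single 2 k 1)).unique ?_).symm
    have : (fun j => (lp.single 2 k (1:ℂ) : ℓ2) j • f j)
        = fun j => if j = k then f k else 0 := by
      ext j
      by_cases h : j = k
      · subst h; simp [lp.single_apply_self]
      · simp [lp.single_apply_ne _ _ _ h, h]
    rw [this]
    exact hasSum_ite_eq k (f k)
  -- c₀ = T* (Ads g)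
  have hc0 : c₀ = ContinuousLinearMap.adjoint T (Ads g) := by
    apply lp.ext
    funext k
    have h1 : (ContinuousLinearMap.adjoint T (Ads g)) k
        = (inner ℂ (lp.single 2 k (1:ℂ) : ℓ2) (ContinuousLinearMap.adjoint T (Ads g)) : ℂ) := by
      rw [lp.inner_single_left]
      simp
    rw [hc₀ k, h1, ContinuousLinearMap.adjoint_inner_right, ← hfk k, hAds,
      ContinuousLinearMap.adjoint_inner_right]
  -- S self-adjoint
  have hSsa : ContinuousLinearMap.adjoint S = S := by
    rw [hS, ContinuousLinearMap.adjoint_comp, ContinuousLinearMap.adjoint_adjoint]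
  -- S ∘ Ads = Sdag ∘ S
  have hkey : S ∘L Ads = Sdag ∘L S := by
    have := congrArg ContinuousLinearMap.adjoint hAdA
    rw [ContinuousLinearMap.adjoint_adjoint] at this
    calc S ∘L Ads = ContinuousLinearMap.adjoint (Sdag ∘L S) := by
          rw [ContinuousLinearMap.adjoint_comp, hSsa, hAds]
      _ = Sdag ∘L S := hAdA
  set P : H →L[ℂ] H := Sdag ∘L S with hP
  have hPsa : ContinuousLinearMap.adjoint P = P := hAdA
  have hPP : P ∘L P = P := by
    rw [hP]
    calc (Sdag ∘L S) ∘L Sdag ∘L S = (Sdag ∘L S ∘L Sdag) ∘L S := by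
          simp [ContinuousLinearMap.comp_assoc]
      _ = Sdag ∘L S := by rw [hAdAAd]
  -- ker S ⊆ ker T*
  have hker : ∀ v : H, S v = 0 → ContinuousLinearMap.adjoint T v = 0 := by
    intro v hv
    have h2 : (inner ℂ (ContinuousLinearMap.adjoint T v) (ContinuousLinearMap.adjoint T v) : ℂ) = 0 := by
      rw [ContinuousLinearMap.adjoint_inner_left]
      have : T (ContinuousLinearMap.adjoint T v) = S v := by rw [hS]; rfl
      rw [this, hv, inner_zero_right]
    exact inner_self_eq_zero.mp h2
  -- P fixes range T
  have hPfix : ∀ c : ℓ2, P (T c) = T c := by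
    intro c
    set w := T c with hw
    set v := w - P w with hv
    have hSv : S v = 0 := by
      have : S (P w) = S w := by
        have := congrArg (fun (L : H →L[ℂ] H) => L w) hAAdA
        simpa [ContinuousLinearMap.comp_apply] using this
      simp [hv, map_sub, this]
    have hTv : ContinuousLinearMap.adjoint T v = 0 := hker v hSv
    have h1 : (inner ℂ v w : ℂ) = 0 := by
      rw [hw, ← ContinuousLinearMap.adjoint_inner_left, hTv, inner_zero_left]
    have h2 : (inner ℂ v (P w) : ℂ) = 0 := by
      have hPv : P v = 0 := by
        have : P (P w) = P w := by
          have := congrArg (fun (L : H →L[ℂ] H) => L w) hPP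
          simpa [ContinuousLinearMap.comp_apply] using this
        simp [hv, map_sub, this]
      calc (inner ℂ v (P w) : ℂ) = inner ℂ (ContinuousLinearMap.adjoint P v) w := by
            rw [ContinuousLinearMap.adjoint_inner_left]
        _ = 0 := by rw [hPsa, hPv, inner_zero_left]
    have hv0 : v = 0 := by
      have : (inner ℂ v v : ℂ) = 0 := by
        have : (inner ℂ v v : ℂ) = inner ℂ v w - inner ℂ v (P w) := by
          rw [hv]; rw [inner_sub_right]
        rw [this, h1, h2, sub_zero]
      exact inner_self_eq_zero.mp this
    have := sub_eq_zero.mp (hv.symm ▸ hv0)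
    exact this.symm
  -- main part 1
  have hTc0 : T c₀ = g := by
    rw [hc0, ← hd]
    have : T (ContinuousLinearMap.adjoint T (Ads (T d))) = (S ∘L Ads) (T d) := by
      rw [hS]; rfl
    rw [this, hkey]
    exact hPfix d
  have hpyth : ∀ c : ℓ2, T c = g → ‖c‖ ^ 2 = ‖c₀‖ ^ 2 + ‖c - c₀‖ ^ 2 := by
    intro c hc
    have horth : (inner ℂ c₀ (c - c₀) : ℂ) = 0 := by
      have hz : T (c - c₀) = 0 := by rw [map_sub, hc, hTc0, sub_self]
      rw [hc0, ContinuousLinearMap.adjoint_inner_left, ← hc0, hz, inner_zero_right]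
    have hce : c = c₀ + (c - c₀) := by abel
    calc ‖c‖ ^ 2 = ‖c₀ + (c - c₀)‖ ^ 2 := by rw [← hce]
      _ = ‖c₀‖ ^ 2 + 2 * (RCLike.re (inner ℂ c₀ (c - c₀) : ℂ)) + ‖c - c₀‖ ^ 2 :=
          norm_add_sq (𝕜 := ℂ) _ _
      _ = ‖c₀‖ ^ 2 + ‖c - c₀‖ ^ 2 := by rw [horth]; simp
  refine ⟨hTc0, hpyth, fun c hc => ?_⟩
  nlinarith [hpyth c hc, norm_nonneg c, norm_nonneg c₀, sq_nonneg ‖c - c₀‖]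

end
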